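/- arXiv:2411.15744 — 2 statements merged into one kernel-verified Lean document; each statement's English description precedes it below -/
import Mathlib

section
/- Let Γ be a group with lower central series (Γ_i), and for each s define Γ'_s = { g ∈ Γ : gⁿ ∈ Γ_s for some integer n ≥ 1 }. If Γ is finitely generated and nilpotent, then Γ'_s is a subgroup of Γ containing Γ_s, and Γ / Γ'_s is torsion-free. -/
open Subgroup

section Aux

open scoped commutatorElement

/-- Multiplying the entries of a commutator by central elements does not change it. -/
private lemma commutatorElement_mul_center {G : Type*} [Group G] (a c z w : G)
    (hz : z ∈ Subgroup.center G) (hw : w ∈ Subgroup.center G) :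
    ⁅a * z, c * w⁆ = ⁅a, c⁆ := by
  have hz' := Subgroup.mem_center_iff.mp hz
  have hw' := Subgroup.mem_center_iff.mp hw
  have h1 : z * (c * w) * z⁻¹ = c * w := by rw [← hz' (c * w), mul_inv_cancel_right]
  have h2 : w * a⁻¹ * w⁻¹ = a⁻¹ := by rw [← hw' a⁻¹, mul_inv_cancel_right]
  calc ⁅a * z, c * w⁆ = a * (z * (c * w) * z⁻¹) * a⁻¹ * w⁻¹ * c⁻¹ := by
        rw [commutatorElement_def]; group
    _ = a * (c * w) * a⁻¹ * w⁻¹ * c⁻¹ := by rw [h1]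
    _ = a * c * (w * a⁻¹ * w⁻¹) * c⁻¹ := by group
    _ = a * c * a⁻¹ * c⁻¹ := by rw [h2]
    _ = ⁅a, c⁆ := (commutatorElement_def a c).symm

/-- A nilpotent group generated by finitely many torsion elements is finite.
(Induction on the nilpotency class.) -/
private lemma finite_of_nilpotent_gen_torsion :
    ∀ (c : ℕ) (G : Type*) [Group G] [Group.IsNilpotent G],
      Group.nilpotencyClass G ≤ c →
      ∀ S : Set G, S.Finite → Subgroup.closure S = ⊤ →
        (∀ s ∈ S, IsOfFinOrder s) → Finite G := by
  intro c
  induction c with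
  | zero =>
    intro G _ _ hc S _ _ _
    haveI : Subsingleton G :=
      nilpotencyClass_zero_iff_subsingleton.mp (Nat.le_zero.mp hc)
    exact Finite.of_subsingleton
  | succ c ih =>
    intro G _ _ hc S hSfin hgen htor
    classical
    set Q := G ⧸ Subgroup.center G with hQ
    let f : G →* Q := QuotientGroup.mk' (Subgroup.center G)
    have hsurj : Function.Surjective f := QuotientGroup.mk'_surjective _
    have hclass : Group.nilpotencyClass Q ≤ c := by
      show Group.nilpotencyClass (G ⧸ Subgroup.center G) ≤ c
      rw [nilpotencyClass_quotient_center]; omega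
    have hgen' : Subgroup.closure (f '' S) = ⊤ := by
      rw [← MonoidHom.map_closure, hgen, ← MonoidHom.range_eq_map]
      exact MonoidHom.range_eq_top_of_surjective f hsurj
    haveI hQfin : Finite Q :=
      ih Q hclass (f '' S) (hSfin.image f) hgen'
        (by rintro _ ⟨s, hs, rfl⟩; exact f.isOfFinOrder (htor s hs))
    -- commutators only depend on cosets mod the center, so `commutatorSet G` is finite
    haveI hcsfin : Finite (commutatorSet G) := by
      have hsub : commutatorSet G ⊆
          Set.range (fun p : Q × Q => ⁅p.1.out, p.2.out⁆) := by
        rintro x ⟨g1, g2, rfl⟩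
        refine ⟨(f g1, f g2), ?_⟩
        have key : ∀ g : G, ∃ z ∈ Subgroup.center G, (f g : Q).out = g * z := by
          intro g
          refine ⟨g⁻¹ * (f g : Q).out, ?_, by group⟩
          have h1 : (QuotientGroup.mk ((f g : Q).out) : Q) = QuotientGroup.mk g := by
            rw [QuotientGroup.out_eq']; rfl
          exact QuotientGroup.eq.mp h1.symm
        obtain ⟨z1, hz1, hzo1⟩ := key g1
        obtain ⟨z2, hz2, hzo2⟩ := key g2
        simp only [hzo1, hzo2]
        exact commutatorElement_mul_center g1 g2 z1 z2 hz1 hz2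
      exact Set.Finite.to_subtype (Set.Finite.subset (Set.finite_range _) hsub)
    -- Schur: the commutator subgroup is finite
    haveI hcomm : Finite (_root_.commutator G) := inferInstance
    haveI hFG : Group.FG G := Group.fg_iff.mpr ⟨S, hgen, hSfin⟩
    -- the abelianization is finitely generated and torsion, hence finite
    haveI hFGA : Group.FG (Abelianization G) := by
      have : Group.FG (G ⧸ _root_.commutator G) := QuotientGroup.fg _
      exact this
    have hgenA : Subgroup.closure ((Abelianization.of : G →* Abelianization G) '' S) = ⊤ := by
      rw [← MonoidHom.map_closure, hgen, ← MonoidHom.range_eq_map]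
      exact MonoidHom.range_eq_top_of_surjective _ (fun x =>
        QuotientGroup.mk'_surjective (_root_.commutator G) x)
    have htorA : Monoid.IsTorsion (Abelianization G) := by
      intro g
      have hle : Subgroup.closure ((Abelianization.of : G →* Abelianization G) '' S) ≤
          CommGroup.torsion (Abelianization G) := by
        rw [Subgroup.closure_le]
        rintro _ ⟨s, hs, rfl⟩
        exact (CommGroup.mem_torsion _).mpr (Abelianization.of.isOfFinOrder (htor s hs))
      have : g ∈ Subgroup.closure ((Abelianization.of : G →* Abelianization G) '' S) := by
        rw [hgenA]; trivial
      exact (CommGroup.mem_torsion _).mp (hle this)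
    haveI hAfin : Finite (Abelianization G) := CommGroup.finite_of_fg_torsion _ htorA
    haveI hQfin' : Finite (G ⧸ _root_.commutator G) := hAfin
    exact Finite.of_equiv _ (Subgroup.groupEquivQuotientProdSubgroup
      (s := _root_.commutator G)).symm

/-- In a nilpotent group, the product of two torsion elements is torsion. -/
private lemma isOfFinOrder_mul_of_nilpotent {G : Type*} [Group G] [Group.IsNilpotent G]
    {a b : G} (ha : IsOfFinOrder a) (hb : IsOfFinOrder b) : IsOfFinOrder (a * b) := by
  set H := Subgroup.closure ({a, b} : Set G) with hH
  have haH : a ∈ H := Subgroup.subset_closure (by simp)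
  have hbH : b ∈ H := Subgroup.subset_closure (by simp)
  set S : Set ↥H := ((↑) : ↥H → G) ⁻¹' {a, b} with hS
  have hfin : S.Finite := Set.Finite.preimage Subtype.val_injective.injOn (Set.toFinite _)
  have hgen : Subgroup.closure S = ⊤ := Subgroup.closure_closure_coe_preimage
  have htor : ∀ s ∈ S, IsOfFinOrder s := by
    intro s hs
    have hcoe : IsOfFinOrder (s : G) := by
      rcases hs with h | h
      · rw [h]; exact ha
      · rw [Set.mem_singleton_iff] at h; rw [h]; exact hb
    rw [isOfFinOrder_iff_pow_eq_one] at hcoe ⊢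
    obtain ⟨n, hn, h1⟩ := hcoe
    exact ⟨n, hn, Subtype.ext (by simpa using h1)⟩
  haveI : Finite ↥H :=
    finite_of_nilpotent_gen_torsion (Group.nilpotencyClass ↥H) ↥H le_rfl S hfin hgen htor
  have h1 : IsOfFinOrder (⟨a * b, mul_mem haH hbH⟩ : ↥H) :=
    isTorsion_of_finite (⟨a * b, mul_mem haH hbH⟩ : ↥H)
  have h2 := H.subtype.isOfFinOrder h1
  simpa using h2

end Aux

/-- For a finitely generated nilpotent group `Γ`, the isolator
`Γ'_s = {g : ∃ n ≥ 1, gⁿ ∈ Γ_s}` of a term `Γ_s` of the lower central series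
is a (normal) subgroup containing `Γ_s`, and the quotient `Γ / Γ'_s` is
torsion-free.  (Mathlib indexing: `Γ_s = lowerCentralSeries Γ (s-1)`; here
`k = s - 1`.) -/
theorem isolator_subgroup_torsionFree_quotient (Γ : Type*) [Group Γ]
    [Group.FG Γ] [Group.IsNilpotent Γ] (k : ℕ) :
    ∃ H : Subgroup Γ,
      (H : Set Γ) = {g : Γ | ∃ n : ℕ, 0 < n ∧ g ^ n ∈ (⊤ : Subgroup Γ).lowerCentralSeries k} ∧
      H.Normal ∧ (⊤ : Subgroup Γ).lowerCentralSeries k ≤ H ∧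
      ∀ g : Γ, (∃ n : ℕ, 0 < n ∧ g ^ n ∈ H) → g ∈ H := by
  set N := (⊤ : Subgroup Γ).lowerCentralSeries k with hN
  haveI : N.Normal := Subgroup.lowerCentralSeries_normal ⊤ k
  let π : Γ →* Γ ⧸ N := QuotientGroup.mk' N
  have key : ∀ g : Γ, (∃ n : ℕ, 0 < n ∧ g ^ n ∈ N) ↔ IsOfFinOrder (π g) := by
    intro g
    rw [isOfFinOrder_iff_pow_eq_one]
    constructor
    · rintro ⟨n, hn, h⟩
      exact ⟨n, hn, by rw [← map_pow]; exact (QuotientGroup.eq_one_iff _).mpr h⟩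
    · rintro ⟨n, hn, h⟩
      rw [← map_pow] at h
      exact ⟨n, hn, (QuotientGroup.eq_one_iff _).mp h⟩
  refine ⟨{ carrier := {g : Γ | ∃ n : ℕ, 0 < n ∧ g ^ n ∈ N}
            one_mem' := ⟨1, one_pos, by simpa using N.one_mem⟩
            mul_mem' := ?_
            inv_mem' := ?_ }, rfl, ?_, ?_, ?_⟩
  · intro x y hx hy
    simp only [Set.mem_setOf_eq] at hx hy ⊢
    rw [key] at hx hy ⊢
    rw [map_mul]
    exact isOfFinOrder_mul_of_nilpotent hx hy
  · rintro x ⟨n, hn, h⟩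
    exact ⟨n, hn, by rw [inv_pow]; exact N.inv_mem h⟩
  · constructor
    rintro x ⟨n, hn, hx⟩ g
    refine ⟨n, hn, ?_⟩
    have hconj : ∀ m : ℕ, (g * x * g⁻¹) ^ m = g * x ^ m * g⁻¹ := by
      intro m
      induction m with
      | zero => simp
      | succ m ihm => rw [pow_succ, pow_succ, ihm]; group
    rw [hconj n]
    exact Subgroup.Normal.conj_mem ‹N.Normal› _ hx g
  · intro g hg
    exact ⟨1, one_pos, by simpa using hg⟩
  · rintro g ⟨n, hn, m, hm, h⟩
    exact ⟨n * m, Nat.mul_pos hn hm, by rwa [pow_mul]⟩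
end

section
/- Let G be a group acting on a set and suppose N is a subgroup of a finitely generated nilpotent group Γ with Γ/N infinite. If Γ is nilpotent and Γ/N is infinite, then Γ/N surjects onto ℤ; in particular, every infinite finitely generated nilpotent group admits a surjective homomorphism onto ℤ. -/
open Subgroup DirectSum
open scoped commutatorElement

/-- Multiplying by central elements does not change commutators. -/
lemma commutator_mul_center {G : Type*} [Group G] (g h z w : G)
    (hz : z ∈ Subgroup.center G) (hw : w ∈ Subgroup.center G) :
    ⁅g * z, h * w⁆ = ⁅g, h⁆ := by
  have hz' : ∀ x : G, x * z = z * x := fun x => Subgroup.mem_center_iff.mp hz x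
  have hw' : ∀ x : G, x * w = w * x := fun x => Subgroup.mem_center_iff.mp hw x
  simp only [commutatorElement_def, mul_inv_rev]
  calc g * z * (h * w) * (z⁻¹ * g⁻¹) * (w⁻¹ * h⁻¹)
      = g * (z * (h * w) * z⁻¹) * g⁻¹ * (w⁻¹ * h⁻¹) := by group
    _ = g * (h * w) * g⁻¹ * (w⁻¹ * h⁻¹) := by rw [← hz' (h * w)]; group
    _ = g * h * g⁻¹ * (g * w * g⁻¹) * (w⁻¹ * h⁻¹) := by group
    _ = g * h * g⁻¹ * w * (w⁻¹ * h⁻¹) := by rw [hw' g]; group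
    _ = g * h * g⁻¹ * h⁻¹ := by group

/-- A nilpotent group with finite abelianization is finite. -/
lemma abelianization_of_surjective (G : Type*) [Group G] :
    Function.Surjective (Abelianization.of : G →* Abelianization G) := fun x =>
  Quotient.inductionOn x fun g => ⟨g, rfl⟩

lemma finite_of_finite_abelianization (G : Type*) [Group G] [Group.IsNilpotent G] :
    Finite (Abelianization G) → Finite G := by
  refine nilpotent_center_quotient_ind
    (P := fun G _ _ => Finite (Abelianization G) → Finite G) G ?_ ?_
  · intro G _ _
    exact fun _ => Finite.of_subsingleton
  · intro G _ _ ih h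
    -- abelianization of the quotient is finite
    have hsurj : Function.Surjective
        (Abelianization.map (QuotientGroup.mk' (Subgroup.center G))) := by
      intro x
      obtain ⟨y, rfl⟩ := abelianization_of_surjective _ x
      obtain ⟨g, rfl⟩ := QuotientGroup.mk'_surjective (Subgroup.center G) y
      exact ⟨Abelianization.of g, rfl⟩
    haveI hq : Finite (G ⧸ Subgroup.center G) := ih (Finite.of_surjective _ hsurj)
    -- commutator set is finite
    haveI : Finite (commutatorSet G) := by
      have hsub : commutatorSet G ⊆ Set.range
          (fun p : (G ⧸ Subgroup.center G) × (G ⧸ Subgroup.center G) =>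
            ⁅Quotient.out p.1, Quotient.out p.2⁆) := by
        rintro _ ⟨g, h, rfl⟩
        refine ⟨(QuotientGroup.mk g, QuotientGroup.mk h), ?_⟩
        have hg : (QuotientGroup.mk g : G ⧸ Subgroup.center G).out
            = g * (g⁻¹ * (QuotientGroup.mk g : G ⧸ Subgroup.center G).out) := by group
        have hh : (QuotientGroup.mk h : G ⧸ Subgroup.center G).out
            = h * (h⁻¹ * (QuotientGroup.mk h : G ⧸ Subgroup.center G).out) := by group
        have hgm : g⁻¹ * (QuotientGroup.mk g : G ⧸ Subgroup.center G).out
            ∈ Subgroup.center G := by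
          rw [← QuotientGroup.eq]
          exact (QuotientGroup.out_eq' _).symm
        have hhm : h⁻¹ * (QuotientGroup.mk h : G ⧸ Subgroup.center G).out
            ∈ Subgroup.center G := by
          rw [← QuotientGroup.eq]
          exact (QuotientGroup.out_eq' _).symm
        simp only
        rw [hg, hh, commutator_mul_center _ _ _ _ hgm hhm]
      exact (Set.finite_range _).subset hsub
    haveI : Finite (_root_.commutator G) := inferInstance
    have : Finite (G ⧸ _root_.commutator G) := h
    exact Finite.of_equiv _ (Subgroup.groupEquivQuotientProdSubgroup (s := _root_.commutator G)).symm

/-- An infinite finitely generated nilpotent group surjects onto `ℤ`. -/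
lemma exists_surjective_onto_int (G : Type*) [Group G] [Group.FG G] [Group.IsNilpotent G]
    [Infinite G] : ∃ φ : G →* Multiplicative ℤ, Function.Surjective φ := by
  -- the abelianization is infinite
  haveI : Infinite (Abelianization G) := by
    rw [← not_finite_iff_infinite]
    intro hfin
    have := finite_of_finite_abelianization G hfin
    exact not_finite G
  haveI : Group.FG (Abelianization G) :=
    Group.fg_of_surjective (f := Abelianization.of) (abelianization_of_surjective G)
  haveI : AddGroup.FG (Additive (Abelianization G)) := GroupFG.iff_add_fg.mp inferInstance
  obtain ⟨n, ι, hι, p, hp, e, ⟨f⟩⟩ :=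
    AddCommGroup.equiv_free_prod_directSum_zmod (Additive (Abelianization G))
  haveI : ∀ i : ι, NeZero (p i ^ e i) := fun i => ⟨pow_ne_zero _ (hp i).pos.ne'⟩
  haveI : Finite (⨁ i : ι, ZMod (p i ^ e i)) :=
    Finite.of_equiv (∀ i : ι, ZMod (p i ^ e i)) DFinsupp.equivFunOnFintype.symm
  have hn : n ≠ 0 := by
    rintro rfl
    haveI : Finite ((Fin 0 →₀ ℤ) × ⨁ i : ι, ZMod (p i ^ e i)) := inferInstance
    haveI : Finite (Additive (Abelianization G)) := Finite.of_equiv _ f.symm.toEquiv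
    exact not_finite (Additive (Abelianization G))
  -- projection onto one ℤ coordinate
  let π : ((Fin n →₀ ℤ) × ⨁ i : ι, ZMod (p i ^ e i)) →+ ℤ :=
    (Finsupp.applyAddHom (⟨0, Nat.pos_of_ne_zero hn⟩ : Fin n)).comp (AddMonoidHom.fst _ _)
  have hπ : Function.Surjective π := fun m =>
    ⟨(Finsupp.single (⟨0, Nat.pos_of_ne_zero hn⟩ : Fin n) m, 0), by
      simp [π, Finsupp.single_eq_same]⟩
  let ψ : Additive (Abelianization G) →+ ℤ := π.comp f.toAddMonoidHom
  have hψ : Function.Surjective ψ := hπ.comp f.surjective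
  refine ⟨(AddMonoidHom.toMultiplicativeRight ψ).comp Abelianization.of, ?_⟩
  intro m
  obtain ⟨a, ha⟩ := hψ (Multiplicative.toAdd m)
  obtain ⟨g, hg⟩ := abelianization_of_surjective G (Additive.toMul a)
  refine ⟨g, ?_⟩
  simp only [MonoidHom.comp_apply, AddMonoidHom.coe_toMultiplicativeRight, Function.comp_apply]
  have : Additive.ofMul (Abelianization.of g) = a := by
    rw [hg]; rfl
  rw [this, ha]
  rfl

/-- If `Γ` is a finitely generated nilpotent group and `N ⊴ Γ` has infinite
quotient, then `Γ/N` surjects onto `ℤ` (phrased via a surjection `Γ → ℤ`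
killing `N`); in particular every infinite finitely generated nilpotent group
surjects onto `ℤ`. -/
theorem infinite_nilpotent_quotient_surjects_onto_int (Γ : Type*) [Group Γ]
    [Group.FG Γ] [Group.IsNilpotent Γ] (N : Subgroup Γ) (hN : N.Normal)
    (hinf : Infinite (Γ ⧸ N)) :
    (∃ φ : Γ →* Multiplicative ℤ, Function.Surjective φ ∧ N ≤ φ.ker) ∧
      (∀ (Γ' : Type) (_ : Group Γ') (_ : Group.FG Γ') (_ : Group.IsNilpotent Γ')
        (_ : Infinite Γ'), ∃ φ : Γ' →* Multiplicative ℤ, Function.Surjective φ) := by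
  haveI := hN
  constructor
  · obtain ⟨ψ, hψ⟩ := exists_surjective_onto_int (Γ ⧸ N)
    refine ⟨ψ.comp (QuotientGroup.mk' N), hψ.comp (QuotientGroup.mk'_surjective N), ?_⟩
    intro x hx
    have h1 : (x : Γ ⧸ N) = 1 := (QuotientGroup.eq_one_iff x).mpr hx
    simp [MonoidHom.mem_ker, h1]
  · intro Γ' _ _ _ _
    exact exists_surjective_onto_int Γ'
end
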